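/- Let E be a real inner product space, A : E → E a continuous linear map with adjoint A†, and let ξ₁, ξ₂ ∈ E be orthonormal vectors. For ε near 0, define ξ_{1,ε} = (ξ₁ + ε A ξ₁)/‖ξ₁ + ε A ξ₁‖ and ξ_{2,ε} = w(ε)/‖w(ε)‖ where w(ε) = (ξ₂ + ε A ξ₂) − ⟨ξ_{1,ε}, ξ₂ + ε A ξ₂⟩ ξ_{1,ε} (Gram–Schmidt orthogonalization against ξ_{1,ε}). Then ε ↦ ξ_{2,ε} is differentiable at ε = 0 with derivative A ξ₂ − ⟨ξ₂, A ξ₂⟩ ξ₂ − ⟨ξ₁, (A + A†) ξ₂⟩ ξ₁. -/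

import Mathlib

open scoped RealInnerProductSpace

/-- Derivative of normalization: if `f` has derivative `f'` at `t` and `‖f t‖ = 1`,
then the normalized curve has derivative `f' - ⟪f t, f'⟫ • f t`. -/
lemma hasDerivAt_normalize {E : Type*} [NormedAddCommGroup E] [InnerProductSpace ℝ E]
    {f : ℝ → E} {f' : E} {t : ℝ} (hf : HasDerivAt f f' t) (hft : ‖f t‖ = 1) :
    HasDerivAt (fun ε => ‖f ε‖⁻¹ • f ε) (f' - ⟪f t, f'⟫ • f t) t := by
  have hinner : HasDerivAt (fun ε => ⟪f ε, f ε⟫) (⟪f t, f'⟫ + ⟪f', f t⟫) t :=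
    hf.inner ℝ hf
  have hval : ⟪f t, f t⟫ = (1 : ℝ) := by
    rw [real_inner_self_eq_norm_sq, hft]; norm_num
  have hsqrt : HasDerivAt (fun ε => Real.sqrt ⟪f ε, f ε⟫)
      ((⟪f t, f'⟫ + ⟪f', f t⟫) / (2 * Real.sqrt ⟪f t, f t⟫)) t := by
    have := (Real.hasDerivAt_sqrt (by rw [hval]; norm_num)).comp t hinner
    exact this.congr_deriv (by ring)
  have hnorm : HasDerivAt (fun ε => ‖f ε‖) ⟪f t, f'⟫ t := by
    have heq : (fun ε => Real.sqrt ⟪f ε, f ε⟫) = fun ε => ‖f ε‖ := by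
      funext ε; rw [real_inner_self_eq_norm_sq]; exact Real.sqrt_sq (norm_nonneg _)
    rw [heq] at hsqrt
    convert hsqrt using 1
    rw [hval, real_inner_comm (f t) f']
    norm_num
  have hinv : HasDerivAt (fun ε => ‖f ε‖⁻¹) (-⟪f t, f'⟫) t := by
    have := hnorm.inv (by rw [hft]; norm_num)
    exact this.congr_deriv (by simp [hft])
  have := hinv.smul hf
  convert this using 1
  · funext ε; rfl
  rw [hft]
  simp [sub_eq_add_neg, add_comm, smul_smul]

/-- Material derivative of the second tangent basis vector, obtained by a Gram–Schmidt
step against the perturbed first tangent vector: the derivative at `ε = 0` is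
`A ξ₂ − ⟨ξ₂, A ξ₂⟩ ξ₂ − ⟨ξ₁, (A + A†) ξ₂⟩ ξ₁`. -/
theorem material_derivative_of_second_tangent
    {E : Type*} [NormedAddCommGroup E] [InnerProductSpace ℝ E] [CompleteSpace E]
    (A : E →L[ℝ] E) (ξ₁ ξ₂ : E) (hξ₁ : ‖ξ₁‖ = 1) (hξ₂ : ‖ξ₂‖ = 1)
    (hortho : ⟪ξ₁, ξ₂⟫ = 0)
    (ξ1ε : ℝ → E) (hξ1ε : ξ1ε = fun ε : ℝ => ‖ξ₁ + ε • A ξ₁‖⁻¹ • (ξ₁ + ε • A ξ₁))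
    (w : ℝ → E)
    (hw : w = fun ε : ℝ => (ξ₂ + ε • A ξ₂) - ⟪ξ1ε ε, ξ₂ + ε • A ξ₂⟫ • ξ1ε ε) :
    HasDerivAt (fun ε : ℝ => ‖w ε‖⁻¹ • w ε)
      (A ξ₂ - ⟪ξ₂, A ξ₂⟫ • ξ₂ - ⟪ξ₁, (A + ContinuousLinearMap.adjoint A) ξ₂⟫ • ξ₁) 0 := by
  -- curve ε ↦ ξ₁ + ε • A ξ₁
  have h1 : HasDerivAt (fun ε : ℝ => ξ₁ + ε • A ξ₁) (A ξ₁) 0 := by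
    simpa using ((hasDerivAt_id (0:ℝ)).smul_const (A ξ₁)).const_add ξ₁
  have h1v : (fun ε : ℝ => ξ₁ + ε • A ξ₁) 0 = ξ₁ := by simp
  have hξ1d : HasDerivAt ξ1ε (A ξ₁ - ⟪ξ₁, A ξ₁⟫ • ξ₁) 0 := by
    rw [hξ1ε]
    have := hasDerivAt_normalize h1 (by simpa using hξ₁)
    simpa using this
  have hξ1v : ξ1ε 0 = ξ₁ := by rw [hξ1ε]; simp [hξ₁]
  -- curve ε ↦ ξ₂ + ε • A ξ₂
  have h2 : HasDerivAt (fun ε : ℝ => ξ₂ + ε • A ξ₂) (A ξ₂) 0 := by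
    simpa using ((hasDerivAt_id (0:ℝ)).smul_const (A ξ₂)).const_add ξ₂
  -- inner product curve
  have hg : HasDerivAt (fun ε => ⟪ξ1ε ε, ξ₂ + ε • A ξ₂⟫)
      (⟪ξ1ε 0, A ξ₂⟫ + ⟪A ξ₁ - ⟪ξ₁, A ξ₁⟫ • ξ₁, (fun ε : ℝ => ξ₂ + ε • A ξ₂) 0⟫) 0 :=
    hξ1d.inner ℝ h2
  have hgval : ⟪ξ1ε 0, ξ₂ + (0:ℝ) • A ξ₂⟫ = 0 := by simp [hξ1v, hortho]
  set c : ℝ := ⟪ξ₁, A ξ₂⟫ + ⟪A ξ₁, ξ₂⟫ with hc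
  have hg' : HasDerivAt (fun ε => ⟪ξ1ε ε, ξ₂ + ε • A ξ₂⟫) c 0 := by
    convert hg using 1
    rw [hξ1v]
    simp only [inner_sub_left, real_inner_smul_left, hortho, mul_zero, sub_zero, zero_smul,
      smul_zero, add_zero, zero_add, inner_add_right, real_inner_smul_right]
    exact hc
  have hwv : w 0 = ξ₂ := by rw [hw]; simp [hξ1v, hortho]
  have hwd : HasDerivAt w (A ξ₂ - c • ξ₁) 0 := by
    rw [hw]
    have hs : HasDerivAt (fun ε => ⟪ξ1ε ε, ξ₂ + ε • A ξ₂⟫ • ξ1ε ε)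
        (⟪ξ1ε 0, ξ₂ + (0:ℝ) • A ξ₂⟫ • (A ξ₁ - ⟪ξ₁, A ξ₁⟫ • ξ₁) + c • ξ1ε 0) 0 :=
      hg'.smul hξ1d
    have := h2.sub hs
    exact this.congr_deriv (by simp [hgval, hξ1v, hortho])
  have key := hasDerivAt_normalize hwd (by rw [hwv, hξ₂])
  rw [hwv] at key
  convert key using 1
  have h1 : ⟪ξ₂, A ξ₂ - c • ξ₁⟫ = ⟪ξ₂, A ξ₂⟫ := by
    rw [inner_sub_right, real_inner_smul_right,
      show ⟪ξ₂, ξ₁⟫ = (0:ℝ) by rw [real_inner_comm]; exact hortho]; ring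
  rw [h1]
  have h2 : ⟪ξ₁, (A + ContinuousLinearMap.adjoint A) ξ₂⟫ = c := by
    rw [hc]
    simp [inner_add_right, ContinuousLinearMap.adjoint_inner_right]
  rw [h2]
  module
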